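/- For every u₁ > 0 and every k with 2 ≤ k ≤ n, the derivative with respect to u₁ of the function u₁ ↦ g₁(U_k(u₁))/g₁(U₁(u₁)) is strictly positive. -/

import Mathlib

open Finset

noncomputable def U (g1 : ℝ → ℝ) (h : ℝ) : ℕ → ℝ → ℝ
  | 0, u => u
  | 1, u => u
  | 2, u => u + h ^ 2 / 2 * g1 u
  | k + 3, u => 2 * U g1 h (k + 2) u - U g1 h (k + 1) u + h ^ 2 * g1 (U g1 h (k + 2) u)

theorem stmt8
    (g1 g2 : ℝ → ℝ)
    (hg1C : ContDiff ℝ 3 g1) (hg2C : ContDiff ℝ 3 g2)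
    (hg1A : AnalyticAt ℝ g1 0) (hg2A : AnalyticAt ℝ g2 0)
    (hg10 : g1 0 = 0) (hg20 : g2 0 = 0)
    (hg1d1 : ∀ x > 0, 0 < deriv g1 x) (hg2d1 : ∀ x > 0, 0 < deriv g2 x)
    (hg1d2 : ∀ x > 0, 0 < iteratedDeriv 2 g1 x) (hg2d2 : ∀ x > 0, 0 < iteratedDeriv 2 g2 x)
    (hg1d3 : ∀ x > 0, 0 ≤ iteratedDeriv 3 g1 x) (hg2d3 : ∀ x > 0, 0 ≤ iteratedDeriv 3 g2 x)
    (n : ℕ) (hn : 2 ≤ n) (h : ℝ) (hh : h = 1 / ((n : ℝ) - 1))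
    (u1 : ℝ) (hu1 : 0 < u1) (k : ℕ) (hk2 : 2 ≤ k) (hkn : k ≤ n) :
    0 < deriv (fun x => g1 (U g1 h k x) / g1 (U g1 h 1 x)) u1 := by
  -- basic facts about g1
  have hdiff : Differentiable ℝ g1 := hg1C.differentiable (by norm_num)
  have hderivC : ContDiff ℝ 2 (deriv g1) :=
    ((contDiff_succ_iff_deriv (n := 2)).mp (by exact_mod_cast hg1C)).2.2
  have hg1mono : StrictMonoOn g1 (Set.Ici 0) := by
    apply strictMonoOn_of_deriv_pos (convex_Ici 0) hg1C.continuous.continuousOn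
    intro x hx
    rw [interior_Ici] at hx
    exact hg1d1 x hx
  have hg1pos : ∀ x : ℝ, 0 < x → 0 < g1 x := by
    intro x hx
    have := hg1mono (Set.self_mem_Ici) (Set.mem_Ici.2 hx.le) hx
    rwa [hg10] at this
  have hd1mono : StrictMonoOn (deriv g1) (Set.Ici 0) := by
    apply strictMonoOn_of_deriv_pos (convex_Ici 0) hderivC.continuous.continuousOn
    intro x hx
    rw [interior_Ici] at hx
    have : iteratedDeriv 2 g1 = deriv (deriv g1) := by
      rw [iteratedDeriv_succ, iteratedDeriv_one]
    have h2 := hg1d2 x hx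
    rwa [this] at h2
  -- strict mean value inequality
  have mvt : ∀ a b : ℝ, 0 < a → a < b → g1 b - g1 a < deriv g1 b * (b - a) := by
    intro a b ha hab
    obtain ⟨c, hc, hceq⟩ := exists_hasDerivAt_eq_slope g1 (deriv g1) hab
      hg1C.continuous.continuousOn (fun x _ => (hdiff x).hasDerivAt)
    have hc0 : (0 : ℝ) < c := ha.trans hc.1
    have hcb : deriv g1 c < deriv g1 b :=
      hd1mono (Set.mem_Ici.2 hc0.le) (Set.mem_Ici.2 (ha.trans hab).le) hc.2
    have hba : (0 : ℝ) < b - a := by linarith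
    have : (g1 b - g1 a) / (b - a) < deriv g1 b := by rw [← hceq]; exact hcb
    calc g1 b - g1 a = (g1 b - g1 a) / (b - a) * (b - a) := by field_simp
      _ < deriv g1 b * (b - a) := by exact mul_lt_mul_of_pos_right this hba
  have hgu : 0 < g1 u1 := hg1pos u1 hu1
  have hdu : 0 < deriv g1 u1 := hg1d1 u1 hu1
  have hnR : (2 : ℝ) ≤ (n : ℝ) := by exact_mod_cast hn
  have hhpos : 0 < h := by rw [hh]; exact div_pos one_pos (by linarith)
  have h2pos : 0 < h ^ 2 := by positivity
  -- the key numerator-positivity lemma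
  have Fpos : ∀ (y d : ℝ), u1 < y → 1 ≤ d →
      0 ≤ (d - 1) * g1 u1 - deriv g1 u1 * (y - u1) →
      0 < deriv g1 y * d * g1 u1 - deriv g1 u1 * g1 y := by
    intro y d hy hd hG
    have h1 : g1 y - g1 u1 < deriv g1 y * (y - u1) := mvt u1 y hu1 hy
    have h2 : deriv g1 u1 < deriv g1 y :=
      hd1mono (Set.mem_Ici.2 hu1.le) (Set.mem_Ici.2 (hu1.trans hy).le) hy
    have hdy : 0 < deriv g1 y := hdu.trans h2
    nlinarith [mul_le_mul_of_nonneg_left hG hdy.le, mul_lt_mul_of_pos_left h1 hdu,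
      mul_pos hgu (sub_pos.2 h2)]
  -- equations for U
  have U1 : ∀ x : ℝ, U g1 h 1 x = x := fun _ => rfl
  have U2 : ∀ x : ℝ, U g1 h 2 x = x + h ^ 2 / 2 * g1 x := fun _ => rfl
  have U3 : ∀ (j : ℕ) (x : ℝ), U g1 h (j + 3) x =
      2 * U g1 h (j + 2) x - U g1 h (j + 1) x + h ^ 2 * g1 (U g1 h (j + 2) x) :=
    fun _ _ => rfl
  -- the main induction
  have key : ∀ m : ℕ, ∃ d e : ℝ,
      HasDerivAt (U g1 h (m + 1)) d u1 ∧ HasDerivAt (U g1 h (m + 2)) e u1 ∧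
      u1 ≤ U g1 h (m + 1) u1 ∧ u1 < U g1 h (m + 2) u1 ∧
      1 ≤ d ∧ d ≤ e ∧ U g1 h (m + 1) u1 ≤ U g1 h (m + 2) u1 ∧
      0 ≤ (d - 1) * g1 u1 - deriv g1 u1 * (U g1 h (m + 1) u1 - u1) ∧
      (d - 1) * g1 u1 - deriv g1 u1 * (U g1 h (m + 1) u1 - u1) ≤
        (e - 1) * g1 u1 - deriv g1 u1 * (U g1 h (m + 2) u1 - u1) := by
    intro m
    induction m with
    | zero =>
      refine ⟨1, 1 + h ^ 2 / 2 * deriv g1 u1, ?_, ?_, ?_, ?_, le_refl 1, ?_, ?_, ?_, ?_⟩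
      · have : U g1 h 1 = fun x : ℝ => x := funext U1
        rw [this]; exact hasDerivAt_id' u1
      · have : U g1 h 2 = fun x : ℝ => x + h ^ 2 / 2 * g1 x := funext U2
        rw [this]
        exact (hasDerivAt_id u1).add (((hdiff u1).hasDerivAt).const_mul (h ^ 2 / 2))
      · rw [U1]
      · rw [U2]; nlinarith
      · nlinarith
      · rw [U1, U2]; nlinarith
      · rw [U1]; simp
      · rw [U1, U2]
        apply le_of_eq; ring
    | succ m ih =>
      obtain ⟨d, e, hd, he, hle1, hlt2, hd1, hde, hV, hG0, hGmono⟩ := ih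
      set y := U g1 h (m + 2) u1 with hy
      have hy0 : 0 < y := hu1.trans hlt2
      have hgy : 0 < g1 y := hg1pos y hy0
      have hdy : 0 < deriv g1 y := hg1d1 y hy0
      have he1 : 1 ≤ e := hd1.trans hde
      have hG0' : 0 ≤ (e - 1) * g1 u1 - deriv g1 u1 * (y - u1) := hG0.trans hGmono
      have F := Fpos y e hlt2 he1 hG0'
      refine ⟨e, 2 * e - d + h ^ 2 * (deriv g1 y * e), he, ?_, hlt2.le, ?_, he1, ?_, ?_,
        hG0', ?_⟩
      · have heq : U g1 h (m + 3) = fun x =>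
            2 * U g1 h (m + 2) x - U g1 h (m + 1) x + h ^ 2 * g1 (U g1 h (m + 2) x) :=
          funext (U3 m)
        rw [heq]
        exact ((he.const_mul 2).sub hd).add
          ((((hdiff y).hasDerivAt).comp u1 he).const_mul (h ^ 2))
      · rw [U3]
        have := mul_pos h2pos hgy
        rw [← hy]
        linarith
      · have h0 : 0 < deriv g1 y * e := mul_pos hdy (by linarith)
        nlinarith [mul_pos h2pos h0]
      · rw [U3, ← hy]
        nlinarith [mul_pos h2pos hgy]
      · rw [U3, ← hy]
        nlinarith [mul_pos h2pos F]
  -- conclude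
  obtain ⟨d, e, hd, he, hle1, hlt2, hd1, hde, hV, hG0, hGmono⟩ := key (k - 2)
  have hkk : k - 2 + 2 = k := Nat.sub_add_cancel hk2
  rw [hkk] at he hlt2 hGmono
  have he1 : 1 ≤ e := hd1.trans hde
  have hG0' : 0 ≤ (e - 1) * g1 u1 - deriv g1 u1 * (U g1 h k u1 - u1) := hG0.trans hGmono
  have F := Fpos (U g1 h k u1) e hlt2 he1 hG0'
  have hnum : HasDerivAt (fun x => g1 (U g1 h k x)) (deriv g1 (U g1 h k u1) * e) u1 :=
    ((hdiff (U g1 h k u1)).hasDerivAt).comp u1 he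
  have hden : HasDerivAt (fun x => g1 (U g1 h 1 x)) (deriv g1 u1) u1 := by
    have : (fun x => g1 (U g1 h 1 x)) = g1 := funext fun x => by rw [U1]
    rw [this]
    exact (hdiff u1).hasDerivAt
  have hne : g1 (U g1 h 1 u1) ≠ 0 := by rw [U1]; exact ne_of_gt hgu
  have hq := hnum.div hden hne
  rw [show (fun x => g1 (U g1 h k x) / g1 (U g1 h 1 x)) = ((fun x => g1 (U g1 h k x)) / fun x => g1 (U g1 h 1 x)) from rfl, hq.deriv]
  rw [U1] at *
  apply div_pos
  · linarith
  · positivity
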